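/- Let (X,T) be a minimal Cantor system and let α ∈ I(X,T) (that is, for every μ ∈ M(X,T) there exists f ∈ C(X,ℤ) with ∫ f dμ = α). Then there exists a single function g ∈ C(X,ℤ) such that ∫ g dμ = α for every μ ∈ M(X,T). -/

import Mathlib

open MeasureTheory

open scoped ENNReal NNReal Topology

/-- Two distinct integer-valued continuous maps on a compact space are at distance ≥ 1. -/
lemma one_le_dist_of_ne_aux {X : Type*} [TopologicalSpace X] [CompactSpace X]
    [MetricSpace X] {f g : C(X, ℤ)} (h : f ≠ g) : 1 ≤ dist f g := by
  obtain ⟨x, hx⟩ : ∃ x, f x ≠ g x := by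
    by_contra hc; push_neg at hc; exact h (ContinuousMap.ext hc)
  have h1 : (1 : ℤ) ≤ |f x - g x| := Int.one_le_abs (sub_ne_zero.mpr hx)
  have h2 : (1 : ℝ) ≤ dist (f x) (g x) := by
    rw [Int.dist_eq]; exact_mod_cast h1
  exact h2.trans (ContinuousMap.dist_apply_le_dist x)

/-- On a compact metrizable space, there are only countably many continuous
integer-valued functions. -/
lemma countable_CXZ_aux (X : Type*) [TopologicalSpace X] [CompactSpace X]
    [TopologicalSpace.MetrizableSpace X] : Countable C(X, ℤ) := by
  letI : MetricSpace X := TopologicalSpace.metrizableSpaceMetric X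
  obtain ⟨D, hDc, hDd⟩ := TopologicalSpace.exists_countable_dense C(X, ℤ)
  haveI := hDc.to_subtype
  have key : ∀ f : C(X, ℤ), ∃ d : D, dist f (d : C(X, ℤ)) < 1/2 := by
    intro f
    obtain ⟨d, hdD, hdball⟩ := hDd.exists_mem_open Metric.isOpen_ball
      ⟨f, Metric.mem_ball_self (by norm_num : (0:ℝ) < 1/2)⟩
    exact ⟨⟨d, hdD⟩, by simpa [Metric.mem_ball, dist_comm] using hdball⟩
  choose φ hφ using key
  have hinj : Function.Injective φ := by
    intro f g hfg
    by_contra hne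
    have h1 := one_le_dist_of_ne_aux hne
    have hf2 := hφ f
    have hg2 := hφ g
    rw [hfg] at hf2
    have htri : dist f g ≤ dist f (↑(φ g) : C(X,ℤ)) + dist (↑(φ g) : C(X,ℤ)) g :=
      dist_triangle _ _ _
    have hcomm : dist (↑(φ g) : C(X,ℤ)) g = dist g (↑(φ g) : C(X,ℤ)) := dist_comm _ _
    linarith
  exact Function.Injective.countable hinj

/-- If `(X,T)` is a minimal Cantor system and `α ∈ I(X,T)` (for every invariant
probability measure `μ` there is `f ∈ C(X,ℤ)` with `∫ f dμ = α`), then there is one single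
`g ∈ C(X,ℤ)` with `∫ g dμ = α` for every invariant probability measure `μ`. -/
theorem stmt2 {X : Type*} [TopologicalSpace X] [CompactSpace X]
    [TopologicalSpace.MetrizableSpace X]
    [TotallyDisconnectedSpace X] [Nonempty X] [MeasurableSpace X] [BorelSpace X]
    (hni : ∀ x : X, ¬IsOpen ({x} : Set X))
    (T : X ≃ₜ X)
    (hmin : ∀ x : X, Dense (Set.range fun n : ℤ => (T.toEquiv ^ n) x))
    (α : ℝ)
    (hα : ∀ μ : Measure X, IsProbabilityMeasure μ → Measure.map T μ = μ →
      ∃ f : C(X, ℤ), ∫ x, (f x : ℝ) ∂μ = α) :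
    ∃ g : C(X, ℤ), ∀ μ : Measure X, IsProbabilityMeasure μ → Measure.map T μ = μ →
      ∫ x, (g x : ℝ) ∂μ = α := by
  by_contra hcon
  push_neg at hcon
  haveI : Countable C(X, ℤ) := countable_CXZ_aux X
  obtain ⟨F, hF⟩ := exists_surjective_nat C(X, ℤ)
  choose μ0 hprob0 hinv0 hne0 using hcon
  set μ : ℕ → Measure X := fun n => μ0 (F n) with hμdef
  have hprob : ∀ n, IsProbabilityMeasure (μ n) := fun n => hprob0 (F n)
  have hinv : ∀ n, Measure.map T (μ n) = μ n := fun n => hinv0 (F n)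
  have hne : ∀ n, ∫ x, ((F n) x : ℝ) ∂(μ n) ≠ α := fun n => hne0 (F n)
  -- real-valued versions of the F k and uniform bounds
  have hcont : ∀ k : ℕ, Continuous (fun x => ((F k) x : ℝ)) :=
    fun k => continuous_of_discreteTopology.comp (F k).continuous
  set Fr : ℕ → C(X, ℝ) := fun k => ⟨fun x => ((F k) x : ℝ), hcont k⟩ with hFrdef
  set b : ℕ → ℕ → ℝ := fun k n => ∫ x, ((F k) x : ℝ) ∂(μ n) with hbdef
  set d : ℕ → ℕ → ℝ := fun k n => b k n - α with hddef
  have hb_bound : ∀ k n, |b k n| ≤ ‖Fr k‖ := by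
    intro k n
    haveI := hprob n
    have : ‖∫ x, ((F k) x : ℝ) ∂(μ n)‖ ≤ ‖Fr k‖ * ((μ n) Set.univ).toReal :=
      norm_integral_le_of_norm_le_const
        (Filter.Eventually.of_forall fun x => (Fr k).norm_coe_le_norm x)
    simpa [measure_univ] using this
  have hd_bound : ∀ k n, ‖d k n‖ ≤ ‖Fr k‖ + |α| := by
    intro k n
    have := hb_bound k n
    calc ‖d k n‖ = |b k n - α| := rfl
    _ ≤ |b k n| + |α| := abs_sub _ _
    _ ≤ ‖Fr k‖ + |α| := by linarith
  -- integrability of the F k with respect to any finite measure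
  have integ : ∀ (k : ℕ) (m : Measure X) [IsFiniteMeasure m],
      Integrable (fun x => ((F k) x : ℝ)) m := by
    intro k m hm
    exact (hcont k).integrable_of_hasCompactSupport
      ((isClosed_tsupport _).isCompact)
  -- the power series
  set p : ℕ → FormalMultilinearSeries ℝ ℝ ℝ :=
    fun k => FormalMultilinearSeries.ofScalars ℝ (d k) with hpdef
  have hrad : ∀ k, ((1/2 : ℝ≥0) : ℝ≥0∞) ≤ (p k).radius := by
    intro k
    apply (p k).le_radius_of_bound (‖Fr k‖ + |α|)
    intro n
    have h1 : ‖p k n‖ = ‖d k n‖ := by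
      rw [hpdef]; exact FormalMultilinearSeries.ofScalars_norm ℝ (d k) n
    have h2 : ((1/2 : ℝ≥0) : ℝ) ^ n ≤ 1 := by
      apply pow_le_one₀ <;> norm_num
    calc ‖p k n‖ * ((1/2:ℝ≥0):ℝ) ^ n ≤ ‖d k n‖ * 1 := by
          rw [h1]; exact mul_le_mul_of_nonneg_left h2 (norm_nonneg _)
    _ ≤ ‖Fr k‖ + |α| := by rw [mul_one]; exact hd_bound k n
  have hball : ∀ k, HasFPowerSeriesOnBall (p k).sum (p k) 0 ((1/2 : ℝ≥0) : ℝ≥0∞) := by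
    intro k
    have hpos : (0:ℝ≥0∞) < ((1/2:ℝ≥0):ℝ≥0∞) := by
      simp only [ENNReal.coe_pos]; norm_num
    exact ((p k).hasFPowerSeriesOnBall (lt_of_lt_of_le hpos (hrad k))).mono hpos (hrad k)
  have hAn : ∀ k, AnalyticOnNhd ℝ (p k).sum (Metric.eball (0:ℝ) ((1/2:ℝ≥0):ℝ≥0∞)) :=
    fun k => (hball k).analyticOnNhd
  -- the one-parameter family of invariant measures
  set ν : ℝ → Measure X :=
    fun t => Measure.sum (fun n => ENNReal.ofReal ((1-t) * t^n) • μ n) with hνdef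
  have hνprob : ∀ t ∈ Set.Ioo (0:ℝ) (1/2), IsProbabilityMeasure (ν t) := by
    rintro t ⟨h0, h1⟩
    have h1t : (0:ℝ) < 1 - t := by linarith
    constructor
    rw [hνdef]
    rw [Measure.sum_apply _ MeasurableSet.univ]
    have huniv : ∀ n, (ENNReal.ofReal ((1-t) * t^n) • μ n) Set.univ
        = ENNReal.ofReal (1-t) * (ENNReal.ofReal t)^n := by
      intro n
      haveI := hprob n
      rw [Measure.smul_apply, measure_univ, smul_eq_mul, mul_one,
        ENNReal.ofReal_mul h1t.le, ENNReal.ofReal_pow h0.le]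
    rw [tsum_congr huniv, ENNReal.tsum_mul_left, ENNReal.tsum_geometric]
    have hsub : (1 : ℝ≥0∞) - ENNReal.ofReal t = ENNReal.ofReal (1-t) := by
      rw [ENNReal.ofReal_sub _ h0.le, ENNReal.ofReal_one]
    rw [hsub]
    exact ENNReal.mul_inv_cancel (by simpa using h1t) ENNReal.ofReal_ne_top
  have hνinv : ∀ t, Measure.map T (ν t) = ν t := by
    intro t
    rw [hνdef]
    rw [Measure.map_sum (T.continuous.measurable.aemeasurable)]
    congr 1
    funext n
    rw [Measure.map_smul, hinv n]
  -- the fundamental identity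
  have key : ∀ k, ∀ t ∈ Set.Ioo (0:ℝ) (1/2),
      ∫ x, ((F k) x : ℝ) ∂(ν t) - α = (1-t) * ((p k).sum t) := by
    rintro k t ⟨h0, h1⟩
    have h1t : (0:ℝ) < 1 - t := by linarith
    have ht1 : t < 1 := by linarith
    haveI := hνprob t ⟨h0, h1⟩
    have hgeo : Summable (fun n : ℕ => t^n) := summable_geometric_of_lt_one h0.le ht1
    have hsum1 : Summable (fun n => b k n * t^n) := by
      refine Summable.of_norm_bounded (g := fun n => ‖Fr k‖ * t^n) (hgeo.mul_left _) fun n => ?_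
      rw [norm_mul, Real.norm_of_nonneg (pow_nonneg h0.le n), Real.norm_eq_abs]
      exact mul_le_mul_of_nonneg_right (hb_bound k n) (pow_nonneg h0.le n)
    have hsumα : Summable (fun n : ℕ => α * t^n) := hgeo.mul_left α
    -- integral over ν t
    have hint : ∫ x, ((F k) x : ℝ) ∂(ν t) = ∑' n, (1-t) * t^n * b k n := by
      rw [hνdef]
      rw [integral_sum_measure (integ k _)]
      refine tsum_congr fun n => ?_
      rw [integral_smul_measure, ENNReal.toReal_ofReal (by positivity)]
      rw [hbdef]
      simp [smul_eq_mul, mul_assoc]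
    -- value of the power series
    have hps : (p k).sum t = (∑' n, b k n * t^n) - α * (1-t)⁻¹ := by
      have h1 : (p k).sum t = ∑' n, d k n * t ^ n := by
        rw [hpdef]
        have := FormalMultilinearSeries.ofScalars_sum_eq (E := ℝ) (d k) t
        simpa [FormalMultilinearSeries.ofScalarsSum, smul_eq_mul] using this
      have h2 : ∀ n : ℕ, d k n * t ^ n = b k n * t^n - α * t^n := by
        intro n; rw [hddef]; ring
      rw [h1, tsum_congr h2, Summable.tsum_sub hsum1 hsumα, tsum_mul_left,
        tsum_geometric_of_lt_one h0.le ht1]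
    have hint2 : ∫ x, ((F k) x : ℝ) ∂(ν t) = (1-t) * ∑' n, b k n * t^n := by
      rw [hint, ← tsum_mul_left]
      exact tsum_congr fun n => by ring
    rw [hint2, hps]
    have : (1-t) * ((1-t)⁻¹) = 1 := mul_inv_cancel₀ h1t.ne'
    field_simp
  -- every t in (1/8, 3/8) is a zero of some power series
  set Z : ℕ → Set ℝ := fun k => {t | t ∈ Set.Ioo (1/8:ℝ) (3/8) ∧ (p k).sum t = 0} with hZdef
  have hcover : Set.Ioo (1/8:ℝ) (3/8) ⊆ ⋃ k, Z k := by
    intro t ht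
    have ht' : t ∈ Set.Ioo (0:ℝ) (1/2) := ⟨by linarith [ht.1], by linarith [ht.2]⟩
    haveI := hνprob t ht'
    obtain ⟨f, hf⟩ := hα (ν t) (hνprob t ht') (hνinv t)
    obtain ⟨k, rfl⟩ := hF f
    have hk := key k t ht'
    rw [hf, sub_self] at hk
    have h1t : (0:ℝ) < 1 - t := by linarith [ht'.2]
    have hz : (p k).sum t = 0 := by
      rcases mul_eq_zero.mp hk.symm with h | h
      · exact absurd h (by linarith)
      · exact h
    exact Set.mem_iUnion.mpr ⟨k, ht, hz⟩
  -- some Z k is infinite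
  have hZinf : ∃ k, (Z k).Infinite := by
    by_contra hfin
    push_neg at hfin
    have hcnt : (Set.Ioo (1/8:ℝ) (3/8)).Countable :=
      Set.Countable.mono hcover (Set.countable_iUnion fun k => (hfin k).countable)
    have hcard := Cardinal.mk_Ioo_real (show (1/8:ℝ) < 3/8 by norm_num)
    have := hcnt.le_aleph0
    rw [hcard] at this
    exact Cardinal.aleph0_lt_continuum.not_ge this
  obtain ⟨k, hkinf⟩ := hZinf
  -- accumulation point of zeros
  have hZsub : Z k ⊆ Set.Icc (1/8:ℝ) (3/8) := fun t ht => Set.Ioo_subset_Icc_self ht.1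
  obtain ⟨x0, hx0K, hx0acc⟩ := hkinf.exists_accPt_of_subset_isCompact isCompact_Icc hZsub
  have hfreq : ∃ᶠ z in 𝓝[≠] x0, (p k).sum z = 0 := by
    have h1 := accPt_iff_frequently.mp hx0acc
    have h2 : ∃ᶠ z in 𝓝 x0, (p k).sum z = 0 ∧ z ∈ ({x0}ᶜ : Set ℝ) :=
      h1.mono fun z hz => ⟨hz.2.2, hz.1⟩
    rwa [← frequently_nhdsWithin_iff] at h2
  -- identity theorem
  have hx0mem : x0 ∈ Metric.eball (0:ℝ) ((1/2:ℝ≥0):ℝ≥0∞) := by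
    rw [Metric.emetric_ball_nnreal, Metric.mem_ball, Real.dist_eq, sub_zero]
    have h1 := hx0K.1
    have h2 := hx0K.2
    have hc : ((1/2:ℝ≥0):ℝ) = 1/2 := by norm_num
    rw [hc, abs_lt]
    constructor <;> linarith
  have hpre : IsPreconnected (Metric.eball (0:ℝ) ((1/2:ℝ≥0):ℝ≥0∞)) := by
    rw [Metric.emetric_ball_nnreal]
    exact (convex_ball (0:ℝ) _).isPreconnected
  have hEqOn := (hAn k).eqOn_zero_of_preconnected_of_frequently_eq_zero hpre hx0mem hfreq
  have hev : ∀ᶠ z in 𝓝 (0:ℝ), (p k).sum z = 0 := by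
    have hmem : Metric.eball (0:ℝ) ((1/2:ℝ≥0):ℝ≥0∞) ∈ 𝓝 (0:ℝ) :=
      Metric.eball_mem_nhds _ (by simp only [ENNReal.coe_pos]; norm_num)
    filter_upwards [hmem] using fun z hz => hEqOn hz
  have hp0 : p k = 0 := ((hball k).hasFPowerSeriesAt.locally_zero_iff).mp hev
  have hd0 : d k = 0 := by
    rw [hpdef] at hp0
    exact (FormalMultilinearSeries.ofScalars_series_eq_zero ℝ).mp hp0
  have := congrFun hd0 k
  rw [hddef] at this
  simp only [Pi.zero_apply, sub_eq_zero] at this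
  exact hne k (by rw [hbdef] at this; exact this)
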